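/- Under Assumptions 1 and 2, the distance of PIAG iterates from the optimum satisfies ‖x_k − x*‖ ≤ (2/μ)‖d_k‖ + 2ηQ Σ_{j=(k−K)_+}^{k−1} ‖d_j‖ for any k ≥ 0 and 0 < η ≤ 1/L, where Q = L/μ is the condition number. -/

import Mathlib

open InnerProductSpace Set Finset Filter Topology
variable {V : Type*} [NormedAddCommGroup V] [InnerProductSpace ℝ V] [CompleteSpace V]
local notation "⟪" a ", " b "⟫" => inner (𝕜 := ℝ) a b

lemma line_hasDerivAt (f : V → ℝ) (hf : Differentiable ℝ f) (x v : V) (t : ℝ) :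
    HasDerivAt (fun s : ℝ => f (x + s • v)) ⟪gradient f (x + t • v), v⟫ t := by
  have h1 : HasDerivAt (fun s : ℝ => x + s • v) v t := by
    simpa using ((hasDerivAt_id t).smul_const v).const_add x
  have h2 := (hf (x + t • v)).hasGradientAt.hasFDerivAt
  have h3 := (hf (x + t • v)).hasFDerivAt.comp_hasDerivAt t h1
  rw [gradient, InnerProductSpace.toDual_symm_apply]
  exact h3

lemma descent_lemma (f : V → ℝ) (hf : Differentiable ℝ f) (L : ℝ)
    (hLip : ∀ a b, ‖gradient f a - gradient f b‖ ≤ L * ‖a - b‖) (x y : V) :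
    f y ≤ f x + ⟪gradient f x, y - x⟫ + L / 2 * ‖y - x‖ ^ 2 := by
  set v := y - x with hv
  set g : ℝ → ℝ := fun t => f (x + t • v) - t * ⟪gradient f x, v⟫ - L / 2 * t ^ 2 * ‖v‖ ^ 2
    with hgdef
  have hder : ∀ t : ℝ, HasDerivAt g
      (⟪gradient f (x + t • v), v⟫ - ⟪gradient f x, v⟫ - L * t * ‖v‖ ^ 2) t := by
    intro t
    have h1 := line_hasDerivAt f hf x v t
    have h2 : HasDerivAt (fun s : ℝ => s * ⟪gradient f x, v⟫) ⟪gradient f x, v⟫ t := by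
      simpa using (hasDerivAt_id t).mul_const _
    have hsq : HasDerivAt (fun s : ℝ => s ^ 2) (2 * t) t := by
      simpa using hasDerivAt_pow 2 t
    have h3 := (hsq.const_mul (L / 2)).mul_const (‖v‖ ^ 2)
    have he : L / 2 * (2 * t) * ‖v‖ ^ 2 = L * t * ‖v‖ ^ 2 := by ring
    rw [he] at h3
    exact (h1.sub h2).sub h3
  have hanti : AntitoneOn g (Icc (0 : ℝ) 1) := by
    apply antitoneOn_of_deriv_nonpos (convex_Icc 0 1)
    · exact Continuous.continuousOn (continuous_iff_continuousAt.2
        fun t => (hder t).differentiableAt.continuousAt)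
    · intro t ht
      exact ((hder t).differentiableAt).differentiableWithinAt
    · intro t ht
      rw [(hder t).deriv]
      have ht' : 0 < t ∧ t < 1 := by simpa [interior_Icc] using ht
      have hb : ⟪gradient f (x + t • v) - gradient f x, v⟫ ≤ L * t * ‖v‖ ^ 2 := by
        calc ⟪gradient f (x + t • v) - gradient f x, v⟫
            ≤ ‖gradient f (x + t • v) - gradient f x‖ * ‖v‖ := real_inner_le_norm _ _
          _ ≤ (L * ‖x + t • v - x‖) * ‖v‖ := by
              gcongr; exact hLip _ _
          _ = L * t * ‖v‖ ^ 2 := by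
              simp [norm_smul, abs_of_pos ht'.1]; ring
      rw [inner_sub_left] at hb
      linarith
  have h01 := hanti (by simp : (0:ℝ) ∈ Icc (0:ℝ) 1) (by simp : (1:ℝ) ∈ Icc (0:ℝ) 1) zero_le_one
  have e0 : g 0 = f x := by simp [hgdef]
  have e1 : g 1 = f y - ⟪gradient f x, v⟫ - L / 2 * ‖v‖ ^ 2 := by
    simp [hgdef, hv]
  rw [e0, e1] at h01
  linarith

lemma convex_first_order (f : V → ℝ) (hf : Differentiable ℝ f)
    (hc : ConvexOn ℝ Set.univ f) (x y : V) :
    f x + ⟪gradient f x, y - x⟫ ≤ f y := by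
  set v := y - x with hv
  set φ : ℝ → ℝ := fun t => f (x + t • v) with hφ
  have hder : HasDerivAt φ ⟪gradient f x, v⟫ 0 := by
    have := line_hasDerivAt f hf x v 0
    simpa using this
  have hslope := hasDerivAt_iff_tendsto_slope.1 hder
  have hsub : (𝓝[>] (0:ℝ)) ≤ 𝓝[≠] (0:ℝ) :=
    nhdsWithin_mono 0 (fun t ht => ne_of_gt ht)
  have hslope' := hslope.mono_left hsub
  have hbound : ∀ᶠ t in 𝓝[>] (0:ℝ), slope φ 0 t ≤ f y - f x := by
    filter_upwards [Ioo_mem_nhdsGT_of_mem (by norm_num : (0:ℝ) ∈ Set.Ico (0:ℝ) 1)]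
      with t ht
    have ht0 : 0 < t := ht.1
    have ht1 : t < 1 := ht.2
    have hconv : φ t ≤ (1 - t) * f x + t * f y := by
      have hmem : x + t • v = (1 - t) • x + t • y := by
        rw [hv]; module
      have := hc.2 (Set.mem_univ x) (Set.mem_univ y) (by linarith : (0:ℝ) ≤ 1 - t)
        (le_of_lt ht0) (by ring)
      simpa [hφ, hmem] using this
    have hφ0 : φ 0 = f x := by simp [hφ]
    rw [slope_def_field, hφ0]
    rw [div_le_iff₀ (by linarith : (0:ℝ) < t - 0)]
    nlinarith [hconv]
  have := le_of_tendsto hslope' hbound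
  linarith

lemma grad_sub_normsq (f : V → ℝ) (hf : Differentiable ℝ f) (μ : ℝ) (x : V) :
    HasGradientAt (fun z => f z - μ / 2 * ‖z‖ ^ 2) (gradient f x - μ • x) x := by
  have h1 : HasFDerivAt f (toDual ℝ V (gradient f x)) x :=
    (hf x).hasGradientAt.hasFDerivAt
  have h2 : HasFDerivAt (fun z : V => ‖z‖ ^ 2) (2 • (innerSL ℝ x)) x := by
    simpa using (hasStrictFDerivAt_norm_sq x).hasFDerivAt
  have h3 := h1.sub (h2.const_mul (μ / 2))
  rw [hasGradientAt_iff_hasFDerivAt]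
  refine h3.congr_fderiv ?_
  ext z
  simp [inner_sub_left, inner_smul_left, real_inner_comm]
  ring

lemma strong_convex_first_order (f : V → ℝ) (hf : Differentiable ℝ f) (μ : ℝ)
    (hsc : ConvexOn ℝ Set.univ (fun z => f z - μ / 2 * ‖z‖ ^ 2)) (x y : V) :
    f x + ⟪gradient f x, y - x⟫ + μ / 2 * ‖y - x‖ ^ 2 ≤ f y := by
  set h : V → ℝ := fun z => f z - μ / 2 * ‖z‖ ^ 2 with hh
  have hdiff : Differentiable ℝ h := by
    intro z
    exact ((hf z).sub (((differentiableAt_id.norm_sq ℝ)).const_mul _))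
  have hgrad : ∀ z, gradient h z = gradient f z - μ • z := fun z =>
    (grad_sub_normsq f hf μ z).gradient
  have := convex_first_order h hdiff hsc x y
  rw [hgrad x] at this
  have hexp : ⟪gradient f x - μ • x, y - x⟫
      = ⟪gradient f x, y - x⟫ - μ * ⟪x, y - x⟫ := by
    rw [inner_sub_left, inner_smul_left]; norm_num
  have hnorm : ‖y - x‖ ^ 2 = ‖y‖ ^ 2 - 2 * ⟪x, y⟫ + ‖x‖ ^ 2 := by
    rw [norm_sub_sq_real]; ring_nf; rw [real_inner_comm]; ring
  have hinner : ⟪x, y - x⟫ = ⟪x, y⟫ - ‖x‖ ^ 2 := by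
    rw [inner_sub_right, real_inner_self_eq_norm_sq]
  simp only [hh] at this
  rw [hexp, hinner] at this
  have key : f x + ⟪gradient f x, y - x⟫ + μ / 2 * ‖y - x‖ ^ 2
      = (f x - μ / 2 * ‖x‖ ^ 2 + (⟪gradient f x, y - x⟫ - μ * (⟪x, y⟫ - ‖x‖ ^ 2)))
        + μ / 2 * ‖y‖ ^ 2 := by
    rw [hnorm]; ring
  rw [key]
  linarith

lemma cocoercive (f : V → ℝ) (hf : Differentiable ℝ f) (L : ℝ) (hL : 0 < L)
    (hLip : ∀ a b, ‖gradient f a - gradient f b‖ ≤ L * ‖a - b‖)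
    (hfo : ∀ a b, f a + ⟪gradient f a, b - a⟫ ≤ f b) (x y : V) :
    (1 / L) * ‖gradient f x - gradient f y‖ ^ 2
      ≤ ⟪gradient f x - gradient f y, x - y⟫ := by
  have key : ∀ a b : V, f a + ⟪gradient f a, b - a⟫
      + 1 / (2 * L) * ‖gradient f b - gradient f a‖ ^ 2 ≤ f b := by
    intro a b
    set Δ := gradient f b - gradient f a with hΔ
    set z := b - L⁻¹ • Δ with hz
    have h1 := hfo a z
    have h2 := descent_lemma f hf L hLip b z
    have e1 : z - b = -(L⁻¹ • Δ) := by rw [hz]; abel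
    have e2 : z - a = (b - a) - L⁻¹ • Δ := by rw [hz]; abel
    have e3 : ⟪gradient f b, z - b⟫ = -(L⁻¹ * ⟪gradient f b, Δ⟫) := by
      rw [e1, inner_neg_right, real_inner_smul_right]
    have e4 : ⟪gradient f a, z - a⟫ = ⟪gradient f a, b - a⟫ - L⁻¹ * ⟪gradient f a, Δ⟫ := by
      rw [e2, inner_sub_right, real_inner_smul_right]
    have e5 : ‖z - b‖ ^ 2 = L⁻¹ ^ 2 * ‖Δ‖ ^ 2 := by
      rw [e1, norm_neg, norm_smul, Real.norm_eq_abs, abs_of_pos (inv_pos.2 hL)]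
      ring
    have e6 : ⟪gradient f b, Δ⟫ - ⟪gradient f a, Δ⟫ = ‖Δ‖ ^ 2 := by
      rw [← inner_sub_left, ← hΔ, real_inner_self_eq_norm_sq]
    have hL' : L⁻¹ * L = 1 := inv_mul_cancel₀ (ne_of_gt hL)
    have hcomb : f a + (⟪gradient f a, b - a⟫ - L⁻¹ * ⟪gradient f a, Δ⟫)
        ≤ f b + (-(L⁻¹ * ⟪gradient f b, Δ⟫)) + L / 2 * (L⁻¹ ^ 2 * ‖Δ‖ ^ 2) := by
      rw [← e3, ← e4, ← e5]; linarith
    have : L / 2 * (L⁻¹ ^ 2 * ‖Δ‖ ^ 2) = 1 / (2 * L) * ‖Δ‖ ^ 2 := by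
      field_simp
    rw [this] at hcomb
    have e7 : L⁻¹ * ⟪gradient f b, Δ⟫ - L⁻¹ * ⟪gradient f a, Δ⟫ = L⁻¹ * ‖Δ‖ ^ 2 := by
      rw [← mul_sub, e6]
    have e8 : L⁻¹ * ‖Δ‖ ^ 2 - 1 / (2 * L) * ‖Δ‖ ^ 2 = 1 / (2 * L) * ‖Δ‖ ^ 2 := by
      have hinv : L⁻¹ = 1 / L := (one_div L).symm
      rw [hinv, ← sub_mul]
      congr 1
      rw [div_sub_div _ _ (ne_of_gt (by linarith : (0:ℝ) < L)) (ne_of_gt (by linarith : (0:ℝ) < 2*L))]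
      field_simp
      ring
    linarith
  have hxy := key x y
  have hyx := key y x
  have e9 : ‖gradient f x - gradient f y‖ = ‖gradient f y - gradient f x‖ := by
    rw [norm_sub_rev]
  have e10 : ⟪gradient f x, y - x⟫ + ⟪gradient f y, x - y⟫
      = -⟪gradient f x - gradient f y, x - y⟫ := by
    have : (y : V) - x = -(x - y) := by abel
    rw [this, inner_neg_right, inner_sub_left]; ring
  have e9' : ‖gradient f y - gradient f x‖ ^ 2 = ‖gradient f x - gradient f y‖ ^ 2 := by
    rw [norm_sub_rev]
  have hmulinv : 1 / (2 * L) * ‖gradient f x - gradient f y‖ ^ 2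
      + 1 / (2 * L) * ‖gradient f x - gradient f y‖ ^ 2
      = 1 / L * ‖gradient f x - gradient f y‖ ^ 2 := by
    rw [← add_mul]
    congr 1
    field_simp
    norm_num
  have hswap : 1 / (2 * L) * ‖gradient f y - gradient f x‖ ^ 2
      = 1 / (2 * L) * ‖gradient f x - gradient f y‖ ^ 2 := by rw [e9']
  linarith [hxy, hyx, e10, hswap, hmulinv]

lemma strong_mono (f : V → ℝ) (hf : Differentiable ℝ f) (μ : ℝ)
    (hsc : ConvexOn ℝ Set.univ (fun z => f z - μ / 2 * ‖z‖ ^ 2)) (x y : V) :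
    μ * ‖x - y‖ ^ 2 ≤ ⟪gradient f x - gradient f y, x - y⟫ := by
  have h1 := strong_convex_first_order f hf μ hsc x y
  have h2 := strong_convex_first_order f hf μ hsc y x
  have e1 : ‖x - y‖ = ‖y - x‖ := norm_sub_rev _ _
  have e2 : ⟪gradient f x, y - x⟫ + ⟪gradient f y, x - y⟫
      = -⟪gradient f x - gradient f y, x - y⟫ := by
    have : (y : V) - x = -(x - y) := by abel
    rw [this, inner_neg_right, inner_sub_left]; ring
  have e1' : ‖y - x‖ ^ 2 = ‖x - y‖ ^ 2 := by rw [norm_sub_rev]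
  have emu : μ / 2 * ‖y - x‖ ^ 2 + μ / 2 * ‖x - y‖ ^ 2 = μ * ‖x - y‖ ^ 2 := by
    rw [e1']; ring
  linarith [h1, h2, e2, emu]

lemma contraction (f : V → ℝ) (hf : Differentiable ℝ f) (μ L η : ℝ)
    (hμ : 0 < μ) (hL : 0 < L) (hη : 0 < η) (hηL : η * L ≤ 1) (hμL : μ ≤ L)
    (hsc : ConvexOn ℝ Set.univ (fun z => f z - μ / 2 * ‖z‖ ^ 2))
    (hLip : ∀ a b, ‖gradient f a - gradient f b‖ ≤ L * ‖a - b‖) (x y : V) :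
    ‖(x - η • gradient f x) - (y - η • gradient f y)‖ ≤ (1 - η * μ / 2) * ‖x - y‖ := by
  have hfo : ∀ a b, f a + ⟪gradient f a, b - a⟫ ≤ f b := by
    intro a b
    have := strong_convex_first_order f hf μ hsc a b
    nlinarith [sq_nonneg ‖b - a‖, hμ.le]
  have hcoco := cocoercive f hf L hL hLip hfo x y
  have hmono := strong_mono f hf μ hsc x y
  set Δ := gradient f x - gradient f y with hΔ
  have hu : (x - η • gradient f x) - (y - η • gradient f y) = (x - y) - η • Δ := by
    rw [hΔ]; module
  rw [hu]
  have hexp : ‖(x - y) - η • Δ‖ ^ 2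
      = ‖x - y‖ ^ 2 - 2 * η * ⟪Δ, x - y⟫ + η ^ 2 * ‖Δ‖ ^ 2 := by
    rw [norm_sub_sq_real, norm_smul, real_inner_smul_right]
    simp [abs_of_pos hη, real_inner_comm]
    ring
  have h1 : η ^ 2 * ‖Δ‖ ^ 2 ≤ η * ⟪Δ, x - y⟫ := by
    have := mul_le_mul_of_nonneg_left hcoco (by positivity : (0:ℝ) ≤ η ^ 2 * L)
    calc η ^ 2 * ‖Δ‖ ^ 2 = (η ^ 2 * L) * ((1 / L) * ‖Δ‖ ^ 2) := by field_simp
      _ ≤ (η ^ 2 * L) * ⟪Δ, x - y⟫ := this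
      _ = (η * L) * (η * ⟪Δ, x - y⟫) := by ring
      _ ≤ 1 * (η * ⟪Δ, x - y⟫) := by
          have hinner : 0 ≤ ⟪Δ, x - y⟫ := le_trans (by positivity) hcoco
          exact mul_le_mul_of_nonneg_right hηL (mul_nonneg hη.le hinner)
      _ = η * ⟪Δ, x - y⟫ := one_mul _
  have h2 : ‖(x - y) - η • Δ‖ ^ 2 ≤ (1 - η * μ) * ‖x - y‖ ^ 2 := by
    rw [hexp]
    nlinarith [mul_le_mul_of_nonneg_left hmono hη.le]
  have h3 : (1 - η * μ) * ‖x - y‖ ^ 2 ≤ ((1 - η * μ / 2) * ‖x - y‖) ^ 2 := by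
    nlinarith [sq_nonneg (η * μ), sq_nonneg ‖x - y‖]
  have h4 : 0 ≤ (1 - η * μ / 2) := by nlinarith
  nlinarith [norm_nonneg ((x - y) - η • Δ), mul_nonneg h4 (norm_nonneg (x - y))]

lemma norm_combo (t : ℝ) (a b : V) :
    ‖(1 - t) • a + t • b‖ ^ 2 = (1 - t) * ‖a‖ ^ 2 + t * ‖b‖ ^ 2 - t * (1 - t) * ‖a - b‖ ^ 2 := by
  rw [norm_add_sq_real, norm_smul, norm_smul, real_inner_smul_left, real_inner_smul_right,
    norm_sub_sq_real]
  simp only [Real.norm_eq_abs, mul_pow, sq_abs]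
  ring

lemma prox_strengthened (r : V → ℝ) (hr : ConvexOn ℝ Set.univ r) (η : ℝ) (hη : 0 < η)
    (v p : V)
    (hmin : ∀ z, 1 / 2 * ‖p - v‖ ^ 2 + η * r p ≤ 1 / 2 * ‖z - v‖ ^ 2 + η * r z) (z : V) :
    1 / 2 * ‖p - v‖ ^ 2 + η * r p + 1 / 2 * ‖z - p‖ ^ 2 ≤ 1 / 2 * ‖z - v‖ ^ 2 + η * r z := by
  set c := ‖z - p‖ ^ 2 with hc
  have hc0 : 0 ≤ c := sq_nonneg _
  have key : ∀ t : ℝ, 0 < t → t ≤ 1 →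
      1 / 2 * ‖p - v‖ ^ 2 + η * r p + (1 - t) / 2 * c ≤ 1 / 2 * ‖z - v‖ ^ 2 + η * r z := by
    intro t ht0 ht1
    have hzt := hmin ((1 - t) • p + t • z)
    have hnorm : ‖((1 - t) • p + t • z) - v‖ ^ 2
        = (1 - t) * ‖p - v‖ ^ 2 + t * ‖z - v‖ ^ 2 - t * (1 - t) * c := by
      have e : ((1 - t) • p + t • z) - v = (1 - t) • (p - v) + t • (z - v) := by
        module
      rw [e, norm_combo t (p - v) (z - v)]
      have e2 : (p - v) - (z - v) = p - z := by abel
      rw [e2, hc, norm_sub_rev z p]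
    have hconv : r ((1 - t) • p + t • z) ≤ (1 - t) * r p + t * r z :=
      hr.2 (Set.mem_univ p) (Set.mem_univ z) (by linarith) (le_of_lt ht0) (by ring)
    have hrs : η * r ((1 - t) • p + t • z) ≤ η * ((1 - t) * r p + t * r z) :=
      mul_le_mul_of_nonneg_left hconv hη.le
    rw [hnorm] at hzt
    -- hzt : P ≤ 1/2*((1-t)A + tB - t(1-t)c) + η r(zt)
    -- combine: P ≤ (1-t)(1/2 A + η r p) + t(1/2 B + η r z) - t(1-t)/2 c
    have hP : 1 / 2 * ‖p - v‖ ^ 2 + η * r p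
        ≤ (1 - t) * (1 / 2 * ‖p - v‖ ^ 2 + η * r p) + t * (1 / 2 * ‖z - v‖ ^ 2 + η * r z)
          - t * (1 - t) / 2 * c := by nlinarith [hzt, hrs]
    -- divide by t
    have hdiv : t * (1 / 2 * ‖p - v‖ ^ 2 + η * r p) + t * (1 - t) / 2 * c
        ≤ t * (1 / 2 * ‖z - v‖ ^ 2 + η * r z) := by nlinarith [hP]
    have := mul_le_mul_of_nonneg_left hdiv (le_of_lt (inv_pos.2 ht0))
    rw [mul_add, ← mul_assoc, ← mul_assoc, ← mul_assoc, inv_mul_cancel₀ (ne_of_gt ht0)] at this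
    simp only [one_mul] at this
    nlinarith [this, mul_le_mul_of_nonneg_left hdiv (le_of_lt (inv_pos.2 ht0))]
  by_contra hcon
  push_neg at hcon
  rcases eq_or_lt_of_le hc0 with hceq | hcpos
  · have := key 1 one_pos le_rfl
    rw [← hceq] at this
    simp at this
    linarith
  · set δ := (1 / 2 * ‖p - v‖ ^ 2 + η * r p + 1 / 2 * c) - (1 / 2 * ‖z - v‖ ^ 2 + η * r z)
      with hδ
    have hδpos : 0 < δ := by rw [hδ]; linarith
    set t0 := min 1 (δ / c) with ht0def
    have ht0pos : 0 < t0 := lt_min one_pos (div_pos hδpos hcpos)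
    have ht0le : t0 ≤ 1 := min_le_left _ _
    have := key t0 ht0pos ht0le
    have hb : t0 / 2 * c < δ := by
      have h1 : t0 ≤ δ / c := min_le_right _ _
      clear_value t0 δ c
      have h2 : t0 * c ≤ δ := by
        rw [← le_div_iff₀ hcpos]; exact h1
      calc t0 / 2 * c = t0 * c / 2 := by ring
        _ ≤ δ / 2 := by linarith
        _ < δ := by linarith
    rw [hδ] at hb
    have h4 : (1 - t0) / 2 * c = 1 / 2 * c - t0 / 2 * c := by ring
    linarith [this, hb, h4]

lemma prox_nonexpansive (r : V → ℝ) (η : ℝ) (u v p q : V)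
    (hp : 1 / 2 * ‖p - u‖ ^ 2 + η * r p + 1 / 2 * ‖q - p‖ ^ 2 ≤ 1 / 2 * ‖q - u‖ ^ 2 + η * r q)
    (hq : 1 / 2 * ‖q - v‖ ^ 2 + η * r q + 1 / 2 * ‖p - q‖ ^ 2 ≤ 1 / 2 * ‖p - v‖ ^ 2 + η * r p) :
    ‖p - q‖ ≤ ‖u - v‖ := by
  have h1 : ‖p - q‖ ^ 2 ≤ ⟪p - q, u - v⟫ := by
    have e1 : ‖p - u‖ ^ 2 = ‖p‖ ^ 2 - 2 * ⟪p, u⟫ + ‖u‖ ^ 2 := norm_sub_sq_real p u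
    have e2 : ‖q - u‖ ^ 2 = ‖q‖ ^ 2 - 2 * ⟪q, u⟫ + ‖u‖ ^ 2 := norm_sub_sq_real q u
    have e3 : ‖p - v‖ ^ 2 = ‖p‖ ^ 2 - 2 * ⟪p, v⟫ + ‖v‖ ^ 2 := norm_sub_sq_real p v
    have e4 : ‖q - v‖ ^ 2 = ‖q‖ ^ 2 - 2 * ⟪q, v⟫ + ‖v‖ ^ 2 := norm_sub_sq_real q v
    have e5 : ‖q - p‖ ^ 2 = ‖p - q‖ ^ 2 := by rw [norm_sub_rev]
    have e6 : ⟪p - q, u - v⟫ = ⟪p, u⟫ - ⟪p, v⟫ - ⟪q, u⟫ + ⟪q, v⟫ := by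
      rw [inner_sub_left, inner_sub_right, inner_sub_right]; ring
    linarith [hp, hq]
  have h2 : ⟪p - q, u - v⟫ ≤ ‖p - q‖ * ‖u - v‖ := real_inner_le_norm _ _
  nlinarith [norm_nonneg (p - q), norm_nonneg (u - v), h1, h2]

lemma optimum_is_prox_min (fs : V → ℝ) (hf : Differentiable ℝ fs) (L η : ℝ)
    (hL : 0 < L) (hη : 0 < η) (hηL : η * L ≤ 1)
    (hLip : ∀ a b, ‖gradient fs a - gradient fs b‖ ≤ L * ‖a - b‖)
    (r : V → ℝ) (xs : V) (hxs : ∀ z, fs xs + r xs ≤ fs z + r z) (z : V) :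
    1 / 2 * ‖xs - (xs - η • gradient fs xs)‖ ^ 2 + η * r xs
      ≤ 1 / 2 * ‖z - (xs - η • gradient fs xs)‖ ^ 2 + η * r z := by
  set w := xs - η • gradient fs xs with hw
  have e1 : xs - w = η • gradient fs xs := by rw [hw]; abel
  have e2 : z - w = (z - xs) + η • gradient fs xs := by rw [hw]; abel
  have e3 : ‖z - w‖ ^ 2 = ‖z - xs‖ ^ 2 + 2 * η * ⟪gradient fs xs, z - xs⟫
      + η ^ 2 * ‖gradient fs xs‖ ^ 2 := by
    rw [e2, norm_add_sq_real, norm_smul, real_inner_smul_right, Real.norm_eq_abs,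
      abs_of_pos hη, real_inner_comm]
    ring
  have e4 : ‖xs - w‖ ^ 2 = η ^ 2 * ‖gradient fs xs‖ ^ 2 := by
    rw [e1, norm_smul, Real.norm_eq_abs, abs_of_pos hη]
    ring
  rw [e3, e4]
  have hdesc := descent_lemma fs hf L hLip xs z
  have hopt := hxs z
  have hin : fs z - fs xs - L / 2 * ‖z - xs‖ ^ 2 ≤ ⟪gradient fs xs, z - xs⟫ := by
    linarith
  have hmul : η * (fs z - fs xs - L / 2 * ‖z - xs‖ ^ 2) ≤ η * ⟪gradient fs xs, z - xs⟫ :=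
    mul_le_mul_of_nonneg_left hin hη.le
  have hr : η * (fs xs - fs z) ≤ η * (r z - r xs) :=
    mul_le_mul_of_nonneg_left (by linarith) hη.le
  have hsq : 0 ≤ (1 - η * L) * ‖z - xs‖ ^ 2 :=
    mul_nonneg (by linarith) (sq_nonneg _)
  nlinarith [hmul, hr, hsq, sq_nonneg ‖z - xs‖]

lemma grad_avg {m : ℕ} {W : Type*} [NormedAddCommGroup W] [InnerProductSpace ℝ W]
    [CompleteSpace W] (f : Fin m → W → ℝ) (hdiff : ∀ i, Differentiable ℝ (f i))
    (c : ℝ) (z : W) :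
    HasGradientAt (fun y => c * ∑ i, f i y) (c • ∑ i, gradient (f i) z) z := by
  have h1 : HasFDerivAt (fun y => ∑ i, f i y)
      (∑ i, InnerProductSpace.toDual ℝ W (gradient (f i) z)) z :=
    HasFDerivAt.fun_sum (fun i _ => ((hdiff i z).hasGradientAt.hasFDerivAt))
  have h2 := h1.const_mul c
  rw [hasGradientAt_iff_hasFDerivAt]
  refine h2.congr_fderiv ?_
  ext y
  simp [inner_smul_left, sum_inner]



/-- Lemma 2 (distance to optimum for PIAG): for any `k ≥ 0` and `0 < η ≤ 1/L`,
`‖x_k - x*‖ ≤ (2/μ)‖d_k‖ + 2ηQ ∑_{j=(k-K)₊}^{k-1} ‖d_j‖` with `Q = L/μ`. -/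
theorem stmt7
    {n m K : ℕ} (hm : 0 < m)
    (f : Fin m → EuclideanSpace ℝ (Fin n) → ℝ) (Li : Fin m → ℝ)
    (hLi : ∀ i, 0 ≤ Li i)
    (hdiff : ∀ i, Differentiable ℝ (f i))
    (hLip : ∀ i x y, ‖gradient (f i) x - gradient (f i) y‖ ≤ Li i * ‖x - y‖)
    (fs : EuclideanSpace ℝ (Fin n) → ℝ)
    (hfs : ∀ z, fs z = (m : ℝ)⁻¹ * ∑ i, f i z)
    (L : ℝ) (hL : L = (m : ℝ)⁻¹ * ∑ i, Li i) (hLpos : 0 < L)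
    (μ : ℝ) (hμ : 0 < μ)
    (hsc : ConvexOn ℝ Set.univ (fun z => fs z - μ / 2 * ‖z‖ ^ 2))
    (r : EuclideanSpace ℝ (Fin n) → ℝ)
    (hr : ConvexOn ℝ Set.univ r) (hrlsc : LowerSemicontinuous r)
    (η : ℝ) (hη : 0 < η)
    (x : ℕ → EuclideanSpace ℝ (Fin n))
    (τ : Fin m → ℕ → ℕ) (hτ : ∀ i k, k - K ≤ τ i k ∧ τ i k ≤ k)
    (g : ℕ → EuclideanSpace ℝ (Fin n))
    (hg : ∀ k, g k = (m : ℝ)⁻¹ • ∑ i, gradient (f i) (x (τ i k)))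
    (hiter : ∀ (k : ℕ) (z : EuclideanSpace ℝ (Fin n)),
      1 / 2 * ‖x (k + 1) - (x k - η • g k)‖ ^ 2 + η * r (x (k + 1))
        ≤ 1 / 2 * ‖z - (x k - η • g k)‖ ^ 2 + η * r z)
    (d : ℕ → EuclideanSpace ℝ (Fin n)) (hd : ∀ k, d k = η⁻¹ • (x (k + 1) - x k))
    (xs : EuclideanSpace ℝ (Fin n)) (hxs : ∀ z, fs xs + r xs ≤ fs z + r z)
    (Fk : ℕ → ℝ) (hFk : ∀ k, Fk k = fs (x k) + r (x k) - (fs xs + r xs))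
    (hηle : η ≤ 1 / L)
    (Q : ℝ) (hQ : Q = L / μ)
    (k : ℕ) :
    ‖x k - xs‖ ≤ 2 / μ * ‖d k‖ + 2 * η * Q * ∑ j ∈ Finset.Ico (k - K) k, ‖d j‖ := by
  classical
  set c : ℝ := (m : ℝ)⁻¹ with hcdef
  have hc0 : 0 ≤ c := by positivity
  have hfs' : fs = fun z => c * ∑ i, f i z := funext hfs
  have hfsdiff : Differentiable ℝ fs := by
    rw [hfs']
    exact (Differentiable.fun_sum (fun i _ => hdiff i)).const_mul c
  have hgradfs : ∀ z, gradient fs z = c • ∑ i, gradient (f i) z := by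
    intro z
    rw [hfs']
    exact (grad_avg f hdiff c z).gradient
  have havg : ∀ (v : Fin m → EuclideanSpace ℝ (Fin n)) (B : Fin m → ℝ),
      (∀ i, ‖v i‖ ≤ B i) → ‖c • ∑ i, v i‖ ≤ c * ∑ i, B i := by
    intro v B hB
    rw [norm_smul, Real.norm_eq_abs, abs_of_nonneg hc0]
    exact mul_le_mul_of_nonneg_left
      ((norm_sum_le _ _).trans (Finset.sum_le_sum fun i _ => hB i)) hc0
  have hfsLip : ∀ a b, ‖gradient fs a - gradient fs b‖ ≤ L * ‖a - b‖ := by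
    intro a b
    rw [hgradfs a, hgradfs b, ← smul_sub, ← Finset.sum_sub_distrib]
    refine (havg _ (fun i => Li i * ‖a - b‖) (fun i => hLip i a b)).trans (le_of_eq ?_)
    rw [← Finset.sum_mul, hL]
    ring
  set S := ∑ j ∈ Finset.Ico (k - K) k, ‖d j‖ with hSdef
  have hS0 : 0 ≤ S := Finset.sum_nonneg (fun j _ => norm_nonneg _)
  by_cases htriv : ∀ v : EuclideanSpace ℝ (Fin n), v = 0
  · rw [htriv (x k - xs), norm_zero, hQ]
    have h1 : 0 ≤ 2 / μ * ‖d k‖ := by positivity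
    have h2 : 0 ≤ 2 * η * (L / μ) * S := by positivity
    linarith
  · push_neg at htriv
    obtain ⟨v0, hv0⟩ := htriv
    have hμL : μ ≤ L := by
      have hmono := strong_mono fs hfsdiff μ hsc v0 0
      have hcs : ⟪gradient fs v0 - gradient fs 0, v0 - 0⟫_ℝ
          ≤ ‖gradient fs v0 - gradient fs 0‖ * ‖v0 - 0‖ := real_inner_le_norm _ _
      have hl := hfsLip v0 0
      have hv0n : 0 < ‖v0‖ := norm_pos_iff.2 hv0
      rw [sub_zero] at hmono hcs hl
      nlinarith [hmono, hcs, hl, hv0n, mul_le_mul_of_nonneg_right hl (norm_nonneg v0),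
        mul_pos hv0n hv0n]
    have hηL : η * L ≤ 1 := by
      rw [le_div_iff₀ hLpos] at hηle
      exact hηle
    -- prox results
    set u := x k - η • g k with hu
    have hp := prox_strengthened r hr η hη u (x (k + 1)) (hiter k) xs
    set w := xs - η • gradient fs xs with hw
    have hqmin := optimum_is_prox_min fs hfsdiff L η hLpos hη hηL hfsLip r xs hxs
    have hq := prox_strengthened r hr η hη w xs hqmin (x (k + 1))
    have hnonexp := prox_nonexpansive r η u w (x (k + 1)) xs hp hq
    have hcontr := contraction fs hfsdiff μ L η hμ hLpos hη hηL hμL hsc hfsLip (x k) xs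
    -- step identity
    have hstep : ∀ j, x (j + 1) - x j = η • d j := by
      intro j
      rw [hd j, smul_smul, mul_inv_cancel₀ (ne_of_gt hη), one_smul]
    -- telescoping bound
    have htel : ∀ i : Fin m, ‖x (τ i k) - x k‖ ≤ η * S := by
      intro i
      obtain ⟨h1, h2⟩ := hτ i k
      have htele : ∑ j ∈ Finset.Ico (τ i k) k, (x (j + 1) - x j) = x k - x (τ i k) := by
        rw [Finset.sum_Ico_eq_sub _ h2, Finset.sum_range_sub, Finset.sum_range_sub]
        abel
      rw [norm_sub_rev, ← htele]
      calc ‖∑ j ∈ Finset.Ico (τ i k) k, (x (j + 1) - x j)‖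
          ≤ ∑ j ∈ Finset.Ico (τ i k) k, ‖x (j + 1) - x j‖ := norm_sum_le _ _
        _ ≤ ∑ j ∈ Finset.Ico (k - K) k, ‖x (j + 1) - x j‖ := by
            apply Finset.sum_le_sum_of_subset_of_nonneg
            · apply Finset.Ico_subset_Ico h1 le_rfl
            · intro j _ _; exact norm_nonneg _
        _ = ∑ j ∈ Finset.Ico (k - K) k, η * ‖d j‖ := by
            apply Finset.sum_congr rfl
            intro j _
            rw [hstep j, norm_smul, Real.norm_eq_abs, abs_of_pos hη]
        _ = η * S := by rw [hSdef, Finset.mul_sum]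
    have hE : ‖gradient fs (x k) - g k‖ ≤ L * (η * S) := by
      rw [hgradfs (x k), hg k, ← smul_sub, ← Finset.sum_sub_distrib]
      refine (havg _ (fun i => Li i * (η * S)) (fun i => ?_)).trans (le_of_eq ?_)
      · refine (hLip i (x k) (x (τ i k))).trans ?_
        rw [norm_sub_rev]
        exact mul_le_mul_of_nonneg_left (htel i) (hLi i)
      · rw [← Finset.sum_mul, hL]
        ring
    have hdk : x (k + 1) - x k = η • d k := hstep k
    have tri1 : ‖u - w‖ ≤ (1 - η * μ / 2) * ‖x k - xs‖ + η * (L * (η * S)) := by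
      have hdecomp : u - w = ((x k - η • gradient fs (x k)) - (xs - η • gradient fs xs))
          + η • (gradient fs (x k) - g k) := by
        rw [hu, hw]; module
      rw [hdecomp]
      refine (norm_add_le _ _).trans ?_
      have h2 : ‖η • (gradient fs (x k) - g k)‖ ≤ η * (L * (η * S)) := by
        rw [norm_smul, Real.norm_eq_abs, abs_of_pos hη]
        exact mul_le_mul_of_nonneg_left hE hη.le
      exact add_le_add hcontr h2
    have tri2 : ‖x k - xs‖ ≤ ‖x (k + 1) - xs‖ + η * ‖d k‖ := by
      have he : x k - xs = (x (k + 1) - xs) - (x (k + 1) - x k) := by abel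
      rw [he]
      refine (norm_sub_le _ _).trans ?_
      rw [hdk, norm_smul, Real.norm_eq_abs, abs_of_pos hη]
    have hmain : ‖x k - xs‖
        ≤ (1 - η * μ / 2) * ‖x k - xs‖ + η * (L * (η * S)) + η * ‖d k‖ := by
      calc ‖x k - xs‖ ≤ ‖x (k + 1) - xs‖ + η * ‖d k‖ := tri2
        _ ≤ ‖u - w‖ + η * ‖d k‖ := by linarith [hnonexp]
        _ ≤ (1 - η * μ / 2) * ‖x k - xs‖ + η * (L * (η * S)) + η * ‖d k‖ := by
            linarith [tri1]
    have hμη2 : 0 < η * μ / 2 := by positivity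
    have hfin : ‖x k - xs‖ * (η * μ / 2) ≤ η * ‖d k‖ + η * (L * (η * S)) := by
      nlinarith [hmain]
    rw [hQ]
    set t := ‖x k - xs‖ with htdef
    set D := ‖d k‖ with hDdef
    clear_value S c t D
    have hμ' : μ ≠ 0 := ne_of_gt hμ
    have hη' : η ≠ 0 := ne_of_gt hη
    have e : (2 / μ * D + 2 * η * (L / μ) * S) * (η * μ / 2)
        = (η * D + η * (L * (η * S))) * (μ⁻¹ * μ) := by
      rw [div_eq_mul_inv, div_eq_mul_inv]
      ring
    rw [inv_mul_cancel₀ hμ', mul_one] at e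
    exact le_of_mul_le_mul_right (by rw [e]; exact hfin) hμη2
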